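/- For m ≥ 2, the element x(T) ∈ (S^{m-1})^{pairs of vertices of T} assigning e_1 to each pair (i,j) with i below j in the planar rooted tree T, and e_2 to each pair (i,j) with i to the left of j, lies in the Kontsevich space K_m(|T|): it is a limit of direction-vector data of genuine configurations in ℝ^m. -/

import Mathlib

open CategoryTheory

/-- A planar rooted tree: either a bare edge `η`, or a vertex with an ordered
list of planar subtrees above it.  These are the objects of the planar dendroidal
category `Ω_p`. -/
inductive PT : Type where
  | edge : PT
  | vert : List PT → PT

/-- The edges of a planar tree: the root edge, or an edge of one of the subtrees. -/
inductive Edge : PT → Type where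
  | root : (t : PT) → Edge t
  | sub : {cs : List PT} → (i : Fin cs.length) → Edge (cs.get i) → Edge (.vert cs)

/-- The subtree of `t` lying above the edge `e`. -/
def subAt : {t : PT} → Edge t → PT
  | _, .root t => t
  | _, .sub i e => subAt e

/-- Edges of the subtree above `e` are edges of the ambient tree. -/
def embed : {t : PT} → (e : Edge t) → Edge (subAt e) → Edge t
  | _, .root _, e' => e'
  | _, .sub i e, e' => .sub i (embed e e')


/-- The position of an edge in the tree: the list of child indices from the root. -/
def Edge.pos : {t : PT} → Edge t → List ℕ
  | _, .root _ => []
  | _, .sub i e => i.1 :: e.pos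

/-- The vertices of a planar tree `T`: the edges whose subtree is a genuine vertex. -/
def Vtx (t : PT) : Type :=
  {e : Edge t // ∃ cs, subAt e = PT.vert cs}

/-- `v` is (strictly) below `w`: `v` lies on the path from `w` to the root. -/
def Below {t : PT} (v w : Vtx t) : Prop :=
  v.1.pos <+: w.1.pos ∧ v.1.pos ≠ w.1.pos

/-- `v` is to the left of `w` in the planar order (for vertices neither of which is below
the other). -/
def LeftOfV {t : PT} (v w : Vtx t) : Prop :=
  ¬ v.1.pos <+: w.1.pos ∧ ¬ w.1.pos <+: v.1.pos ∧ List.Lex (· < ·) v.1.pos w.1.pos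

noncomputable section

open scoped RealInnerProductSpace

variable (m : ℕ)

/-- The first standard basis vector of `ℝ^m`, as a point of `S^{m-1}` (for `m ≥ 2`). -/
def e₁ (hm : 2 ≤ m) : Metric.sphere (0 : EuclideanSpace ℝ (Fin m)) 1 :=
  ⟨EuclideanSpace.single ⟨0, by omega⟩ (1 : ℝ), by
    simp [mem_sphere_zero_iff_norm, EuclideanSpace.norm_single]⟩

/-- The second standard basis vector of `ℝ^m`, as a point of `S^{m-1}` (for `m ≥ 2`). -/
def e₂ (hm : 2 ≤ m) : Metric.sphere (0 : EuclideanSpace ℝ (Fin m)) 1 :=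
  ⟨EuclideanSpace.single ⟨1, by omega⟩ (1 : ℝ), by
    simp [mem_sphere_zero_iff_norm, EuclideanSpace.norm_single]⟩

/-- The antipode on the sphere. -/
def sphNeg (p : Metric.sphere (0 : EuclideanSpace ℝ (Fin m)) 1) :
    Metric.sphere (0 : EuclideanSpace ℝ (Fin m)) 1 :=
  ⟨-p.1, by
    have := p.2
    simp only [mem_sphere_zero_iff_norm] at this ⊢
    simpa using this⟩

variable {m}

/-- The normalized-difference map on configurations of points of `ℝ^m` indexed by the
vertices of `T`: an injective `x : |T| → ℝ^m` is sent to the tuple of unit vectors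
`(x w − x v)/‖x w − x v‖` over ordered pairs of distinct vertices. -/
def dirMap (t : PT) (x : {x : Vtx t → EuclideanSpace ℝ (Fin m) // Function.Injective x}) :
    {p : Vtx t × Vtx t // p.1 ≠ p.2} → Metric.sphere (0 : EuclideanSpace ℝ (Fin m)) 1 :=
  fun p =>
    ⟨‖x.1 p.1.2 - x.1 p.1.1‖⁻¹ • (x.1 p.1.2 - x.1 p.1.1), by
      have hne : x.1 p.1.2 - x.1 p.1.1 ≠ 0 :=
        sub_ne_zero.2 fun h => p.2 (x.2 h).symm
      have hnorm : ‖x.1 p.1.2 - x.1 p.1.1‖ ≠ 0 := norm_ne_zero_iff.2 hne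
      simp [mem_sphere_zero_iff_norm, norm_smul, abs_of_nonneg, inv_mul_cancel₀ hnorm]⟩

open Classical in
/-- The element `x(T)` of `(S^{m-1})^{pairs}` which assigns `e₁` to each pair `(v, w)` with
`v` below `w` in the planar rooted tree `T`, and `e₂` to each pair `(v, w)` with `v` to the
left of `w` (and the antipodal values on the transposed pairs). -/
def xT (hm : 2 ≤ m) (t : PT) :
    {p : Vtx t × Vtx t // p.1 ≠ p.2} → Metric.sphere (0 : EuclideanSpace ℝ (Fin m)) 1 :=
  fun p =>
    if Below p.1.1 p.1.2 then e₁ m hm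
    else if Below p.1.2 p.1.1 then sphNeg m (e₁ m hm)
    else if LeftOfV p.1.1 p.1.2 then e₂ m hm
    else sphNeg m (e₂ m hm)

namespace KontsevichAux
open Filter Topology

noncomputable def cc (i : ℕ) : ℝ := 1 - (2:ℝ)⁻¹ ^ i
noncomputable def dd (i : ℕ) : ℝ := (16:ℝ)⁻¹ * (4:ℝ)⁻¹ ^ i

noncomputable def Hs (ε : ℝ) : List ℕ → ℝ
  | [] => 0
  | i :: l => cc i * ε + dd i * ε^2 * Hs ε l

noncomputable def Ws (ε : ℝ) : List ℕ → ℝ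
  | [] => 1
  | i :: l => dd i * ε^2 * Ws ε l

lemma cc_nonneg (i : ℕ) : 0 ≤ cc i := by
  have h : (2:ℝ)⁻¹ ^ i ≤ 1 := pow_le_one₀ (by norm_num) (by norm_num)
  simp only [cc]; linarith

lemma cc_lt_one (i : ℕ) : cc i < 1 := by
  have h : 0 < (2:ℝ)⁻¹ ^ i := by positivity
  simp only [cc]; linarith

lemma dd_pos (i : ℕ) : 0 < dd i := by simp only [dd]; positivity

lemma dd_le (i : ℕ) : dd i ≤ (16:ℝ)⁻¹ := by
  have h1 : (4:ℝ)⁻¹ ^ i ≤ 1 := pow_le_one₀ (by norm_num) (by norm_num)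
  simp only [dd]; nlinarith

lemma cc_gap {x y : ℕ} (h : x < y) : (2:ℝ)⁻¹ ^ (x+1) ≤ cc y - cc x := by
  have h1 : (2:ℝ)⁻¹ ^ y ≤ (2:ℝ)⁻¹ ^ (x+1) :=
    pow_le_pow_of_le_one (by norm_num) (by norm_num) h
  have h2 : (2:ℝ)⁻¹ ^ x = 2 * 2⁻¹ ^ (x+1) := by ring
  simp only [cc]; linarith

lemma cc_gap_pos {x y : ℕ} (h : x < y) : 0 < cc y - cc x := by
  have := cc_gap h
  have h2 : (0:ℝ) < (2:ℝ)⁻¹ ^ (x+1) := by positivity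
  linarith

lemma Hs_nonneg {ε : ℝ} (hε : 0 ≤ ε) (l : List ℕ) : 0 ≤ Hs ε l := by
  induction l with
  | nil => simp [Hs]
  | cons i l ih =>
    have h1 := cc_nonneg i
    have h2 := (dd_pos i).le
    have h3 : 0 ≤ dd i * ε^2 * Hs ε l := mul_nonneg (mul_nonneg h2 (sq_nonneg ε)) ih
    have h4 : 0 ≤ cc i * ε := mul_nonneg h1 hε
    simp only [Hs]; linarith

lemma Hs_le {ε : ℝ} (hε : 0 ≤ ε) (hε1 : ε ≤ 1) (l : List ℕ) : Hs ε l ≤ 2 * ε := by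
  induction l with
  | nil => simp [Hs]; linarith
  | cons i l ih =>
    have h1 := cc_lt_one i
    have h3 := dd_le i
    have h4 := dd_pos i
    have h5 := Hs_nonneg hε l
    have hε2 : ε^2 ≤ 1 := by nlinarith
    have A : cc i * ε ≤ ε := mul_le_of_le_one_left hε h1.le
    have B : dd i * ε^2 * Hs ε l ≤ dd i * ε^2 * (2*ε) :=
      mul_le_mul_of_nonneg_left ih (mul_nonneg h4.le (sq_nonneg ε))
    have C : dd i * ε^2 ≤ 16⁻¹ := by nlinarith [sq_nonneg ε]
    have D : dd i * ε^2 * (2*ε) ≤ 16⁻¹ * (2*ε) :=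
      mul_le_mul_of_nonneg_right C (by linarith)
    simp only [Hs]; linarith

lemma Ws_pos {ε : ℝ} (hε : 0 < ε) (l : List ℕ) : 0 < Ws ε l := by
  induction l with
  | nil => simp [Ws]
  | cons i l ih =>
    have h := dd_pos i
    have h2 : 0 < dd i * ε^2 * Ws ε l := by positivity
    simpa only [Ws] using h2

lemma Ws_nonneg {ε : ℝ} (hε : 0 ≤ ε) (l : List ℕ) : 0 ≤ Ws ε l := by
  induction l with
  | nil => simp [Ws]
  | cons i l ih =>
    have h := (dd_pos i).le
    have h2 : 0 ≤ dd i * ε^2 * Ws ε l := mul_nonneg (mul_nonneg h (sq_nonneg ε)) ih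
    simpa only [Ws] using h2

lemma Ws_le_one {ε : ℝ} (hε : 0 ≤ ε) (hε1 : ε ≤ 1) (l : List ℕ) : Ws ε l ≤ 1 := by
  induction l with
  | nil => simp [Ws]
  | cons i l ih =>
    have h3 := dd_le i
    have h4 := dd_pos i
    have h6 := Ws_nonneg hε l
    have hε2 : ε^2 ≤ 1 := by nlinarith
    have h : dd i * ε^2 * Ws ε l ≤ 16⁻¹ * 1 * 1 := by
      apply mul_le_mul _ ih h6 (by norm_num)
      calc dd i * ε^2 ≤ 16⁻¹ * ε^2 := mul_le_mul_of_nonneg_right h3 (sq_nonneg ε)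
        _ ≤ 16⁻¹ * 1 := by nlinarith
    simp only [Ws]; linarith

lemma Ws_cons_le {ε : ℝ} (hε : 0 ≤ ε) (hε1 : ε ≤ 1) (i : ℕ) (l : List ℕ) :
    Ws ε (i :: l) ≤ 16⁻¹ := by
  have h3 := dd_le i
  have h5 := Ws_le_one hε hε1 l
  have h6 := Ws_nonneg hε l
  have hε2 : ε^2 ≤ 1 := by nlinarith
  have h : dd i * ε^2 * Ws ε l ≤ 16⁻¹ * 1 * 1 := by
    apply mul_le_mul _ h5 h6 (by norm_num)
    calc dd i * ε^2 ≤ 16⁻¹ * ε^2 := mul_le_mul_of_nonneg_right h3 (sq_nonneg ε)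
      _ ≤ 16⁻¹ * 1 := by nlinarith
  simp only [Ws]; linarith

lemma Hs_append (ε : ℝ) (p q : List ℕ) : Hs ε (p ++ q) = Hs ε p + Ws ε p * Hs ε q := by
  induction p with
  | nil => simp [Hs, Ws]
  | cons i p ih => rw [List.cons_append]; simp only [Hs, Ws]; rw [ih]; ring

lemma Ws_append (ε : ℝ) (p q : List ℕ) : Ws ε (p ++ q) = Ws ε p * Ws ε q := by
  induction p with
  | nil => simp [Ws]
  | cons i p ih => rw [List.cons_append]; simp only [Ws]; rw [ih]; ring

lemma continuous_Hs (l : List ℕ) : Continuous (fun ε => Hs ε l) := by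
  induction l with
  | nil => simpa [Hs] using continuous_const
  | cons i l ih => simp only [Hs]; fun_prop

lemma continuous_Ws (l : List ℕ) : Continuous (fun ε => Ws ε l) := by
  induction l with
  | nil => simpa [Ws] using continuous_const
  | cons i l ih => simp only [Ws]; fun_prop

lemma Hs_zero (l : List ℕ) : Hs 0 l = 0 := by
  cases l <;> simp [Hs]

lemma Ws_zero_cons (i : ℕ) (l : List ℕ) : Ws 0 (i :: l) = 0 := by
  simp [Ws]

/-- Key positivity at diverging lists. -/
lemma Hs_lt {ε : ℝ} (hε : 0 < ε) (hε1 : ε < 1) {x y : ℕ} (hxy : x < y)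
    (p a' b' : List ℕ) : Hs ε (p ++ x :: a') < Hs ε (p ++ y :: b') := by
  rw [Hs_append, Hs_append]
  have hWp := Ws_pos hε p
  have key : Hs ε (x :: a') < Hs ε (y :: b') := by
    have h1 := Hs_le hε.le hε1.le a'
    have h3 := Hs_nonneg hε.le b'
    have hgap := cc_gap hxy
    have hdx : dd x ≤ 16⁻¹ * (2:ℝ)⁻¹ ^ x := by
      have h : (4:ℝ)⁻¹ ^ x ≤ (2:ℝ)⁻¹ ^ x :=
        pow_le_pow_left₀ (by norm_num) (by norm_num) x
      simp only [dd]; nlinarith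
    have hp2 : (0:ℝ) < (2:ℝ)⁻¹ ^ x := by positivity
    have hε2 : ε^2 ≤ 1 := by nlinarith
    have e3 : ε^3 ≤ ε := by nlinarith [mul_le_mul_of_nonneg_left hε2 hε.le]
    have B1 : dd x * ε^2 * Hs ε a' ≤ dd x * ε^2 * (2*ε) :=
      mul_le_mul_of_nonneg_left h1 (mul_nonneg (dd_pos x).le (sq_nonneg ε))
    have B2 : dd x * ε^2 * (2*ε) = 2 * dd x * ε^3 := by ring
    have B3 : 2 * dd x * ε^3 ≤ 2 * dd x * ε :=
      mul_le_mul_of_nonneg_left e3 (by linarith [dd_pos x])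
    have B4 : 2 * dd x * ε ≤ 2 * (16⁻¹ * 2⁻¹^x) * ε :=
      mul_le_mul_of_nonneg_right (by linarith) hε.le
    have B5 : 2 * ((16:ℝ)⁻¹ * 2⁻¹^x) * ε < 2⁻¹^(x+1) * ε := by
      have hpow : (2:ℝ)⁻¹^(x+1) = 2⁻¹ * 2⁻¹^x := by ring
      rw [hpow]
      nlinarith [mul_pos hp2 hε]
    have B6 : (2:ℝ)⁻¹^(x+1) * ε ≤ (cc y - cc x) * ε :=
      mul_le_mul_of_nonneg_right hgap hε.le
    have hy : 0 ≤ dd y * ε^2 * Hs ε b' :=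
      mul_nonneg (mul_nonneg (dd_pos y).le (sq_nonneg ε)) h3
    simp only [Hs]
    nlinarith
  have h := mul_lt_mul_of_pos_left key hWp
  linarith

theorem list_tri (a : List ℕ) : ∀ (b : List ℕ), a = b ∨ (∃ y b', b = a ++ y :: b') ∨
    (∃ x a', a = b ++ x :: a') ∨
    (∃ p x y a' b', x ≠ y ∧ a = p ++ x :: a' ∧ b = p ++ y :: b') := by
  induction a with
  | nil =>
    intro b
    cases b with
    | nil => left; rfl
    | cons y b' => right; left; exact ⟨y, b', rfl⟩
  | cons x a' ih =>
    intro b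
    cases b with
    | nil => right; right; left; exact ⟨x, a', rfl⟩
    | cons y b' =>
      by_cases hxy : x = y
      · subst hxy
        rcases ih b' with h | ⟨z, c, h⟩ | ⟨z, c, h⟩ | ⟨p, u, v, c, d, huv, h1, h2⟩
        · left; rw [h]
        · right; left; exact ⟨z, c, by rw [h]; rfl⟩
        · right; right; left; exact ⟨z, c, by rw [h]; rfl⟩
        · right; right; right
          exact ⟨x :: p, u, v, c, d, huv, by rw [h1]; rfl, by rw [h2]; rfl⟩
      · right; right; right; exact ⟨[], x, y, a', b', hxy, rfl, rfl⟩

theorem lex_div {x y : ℕ} (h : x < y) (p a' b' : List ℕ) :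
    List.Lex (· < ·) (p ++ x :: a') (p ++ y :: b') := by
  induction p with
  | nil => exact List.Lex.rel h
  | cons i p ih => exact List.Lex.cons ih

theorem not_lex_div {x y : ℕ} (h : x < y) (p a' b' : List ℕ) :
    ¬ List.Lex (· < ·) (p ++ y :: b') (p ++ x :: a') := by
  induction p with
  | nil =>
    intro hl
    cases hl with
    | cons h' => omega
    | rel h' => omega
  | cons i p ih =>
    intro hl
    cases hl with
    | cons h' => exact ih h'
    | rel h' => omega

theorem not_prefix_div {x y : ℕ} (h : x ≠ y) (p a' b' : List ℕ) :
    ¬ (p ++ x :: a') <+: (p ++ y :: b') := by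
  intro hp
  rw [List.prefix_append_right_inj, List.cons_prefix_cons] at hp
  exact h hp.1

theorem ne_append_cons (a : List ℕ) (y : ℕ) (b' : List ℕ) :
    a ≠ a ++ y :: b' := by
  intro h
  have h2 := congrArg List.length h
  simp at h2

theorem pos_inj : ∀ {t : PT} (e e' : Edge t), e.pos = e'.pos → e = e' := by
  intro t e
  induction e with
  | root t =>
    intro e' h
    cases e' with
    | root => rfl
    | sub i e' => simp [Edge.pos] at h
  | sub i e ih =>
    intro e' h
    cases e' with
    | root => simp [Edge.pos] at h
    | sub j e' =>
      simp only [Edge.pos, List.cons.injEq] at h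
      obtain ⟨h1, h2⟩ := h
      have hij : i = j := Fin.ext h1
      subst hij
      rw [ih e' h2]

variable {m : ℕ}

lemma normE1 (hm : 2 ≤ m) : ‖(e₁ m hm).1‖ = 1 := by
  have h := (e₁ m hm).2
  simpa [mem_sphere_zero_iff_norm] using h

lemma normE2 (hm : 2 ≤ m) : ‖(e₂ m hm).1‖ = 1 := by
  have h := (e₂ m hm).2
  simpa [mem_sphere_zero_iff_norm] using h

lemma E1_ne (hm : 2 ≤ m) : (e₁ m hm).1 ≠ 0 := by
  intro h
  have h2 := normE1 hm
  rw [h] at h2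
  simp at h2

lemma E2_ne (hm : 2 ≤ m) : (e₂ m hm).1 ≠ 0 := by
  intro h
  have h2 := normE2 hm
  rw [h] at h2
  simp at h2

lemma e_indep (hm : 2 ≤ m) {s1 s2 : ℝ}
    (h : s1 • (e₁ m hm).1 + s2 • (e₂ m hm).1 = 0) : s1 = 0 ∧ s2 = 0 := by
  have h0 : (s1 • (e₁ m hm).1 + s2 • (e₂ m hm).1) ⟨0, by omega⟩
      = (0 : EuclideanSpace ℝ (Fin m)) ⟨0, by omega⟩ := by rw [h]
  have h1 : (s1 • (e₁ m hm).1 + s2 • (e₂ m hm).1) ⟨1, by omega⟩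
      = (0 : EuclideanSpace ℝ (Fin m)) ⟨1, by omega⟩ := by rw [h]
  simp [e₁, e₂, PiLp.add_apply, PiLp.smul_apply, EuclideanSpace.single_apply,
    Fin.ext_iff] at h0 h1
  exact ⟨h0, h1⟩

/-- The configuration of points realizing `x(T)` in the limit. -/
def ptCfg (hm : 2 ≤ m) (t : PT) (ε : ℝ) (v : Vtx t) : EuclideanSpace ℝ (Fin m) :=
  (-(Ws ε v.1.pos)) • (e₁ m hm).1 + (Hs ε v.1.pos) • (e₂ m hm).1

lemma diff_eq (hm : 2 ≤ m) (t : PT) (ε : ℝ) (v w : Vtx t) :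
    ptCfg hm t ε w - ptCfg hm t ε v
      = (Ws ε v.1.pos - Ws ε w.1.pos) • (e₁ m hm).1
        + (Hs ε w.1.pos - Hs ε v.1.pos) • (e₂ m hm).1 := by
  simp only [ptCfg]
  module

lemma ptCfg_inj (hm : 2 ≤ m) (t : PT) {ε : ℝ} (hε : 0 < ε) (hε1 : ε < 1) :
    Function.Injective (ptCfg hm t ε) := by
  intro v w h
  by_contra hvw
  have hpos : v.1.pos ≠ w.1.pos := fun hp => hvw (Subtype.ext (pos_inj _ _ hp))
  have hzero : ptCfg hm t ε w - ptCfg hm t ε v = 0 := by rw [h]; exact sub_self _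
  rw [diff_eq] at hzero
  obtain ⟨h1, h2⟩ := e_indep hm hzero
  rw [sub_eq_zero] at h1 h2
  rcases list_tri v.1.pos w.1.pos with hc | ⟨y, b', hb⟩ | ⟨x, a', ha⟩
    | ⟨p, x, y, a', b', hxy, ha, hb⟩
  · exact hpos hc
  · rw [hb, Ws_append] at h1
    have hW := Ws_pos hε v.1.pos
    have hW2 := Ws_cons_le hε.le hε1.le y b'
    have hW3 := Ws_nonneg hε.le (y :: b')
    nlinarith
  · rw [ha, Ws_append] at h1
    have hW := Ws_pos hε w.1.pos
    have hW2 := Ws_cons_le hε.le hε1.le x a'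
    have hW3 := Ws_nonneg hε.le (x :: a')
    nlinarith
  · rcases hxy.lt_or_gt with hlt | hlt
    · have := Hs_lt hε hε1 hlt p a' b'
      rw [← ha, ← hb] at this
      linarith [h2.symm, this]
    · have := Hs_lt hε hε1 hlt p b' a'
      rw [← ha, ← hb] at this
      linarith [h2, this]

/-- Engine lemma: a positive rescaling does not change the normalization, so the
normalized vectors converge to the normalization of the limit. -/
lemma tendsto_normalize {f g : ℕ → EuclideanSpace ℝ (Fin m)}
    {u : EuclideanSpace ℝ (Fin m)} {r : ℕ → ℝ}
    (hr : ∀ n, 0 < r n) (hfg : ∀ n, f n = r n • g n) (hu : u ≠ 0)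
    (hg : Tendsto g atTop (𝓝 u)) :
    Tendsto (fun n => ‖f n‖⁻¹ • f n) atTop (𝓝 (‖u‖⁻¹ • u)) := by
  have hnu : ‖u‖ ≠ 0 := norm_ne_zero_iff.2 hu
  have key : ∀ n, ‖g n‖⁻¹ • g n = ‖f n‖⁻¹ • f n := by
    intro n
    rw [hfg n, norm_smul, Real.norm_eq_abs, abs_of_pos (hr n), smul_smul, mul_inv,
      mul_comm ((r n)⁻¹), mul_assoc, inv_mul_cancel₀ (hr n).ne', mul_one]
  have h2 : Tendsto (fun n => ‖g n‖⁻¹ • g n) atTop (𝓝 (‖u‖⁻¹ • u)) :=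
    ((hg.norm).inv₀ hnu).smul hg
  exact h2.congr key

end KontsevichAux

open Filter Topology KontsevichAux

/-- For `m ≥ 2` and any planar rooted tree `T`, the tuple `x(T)` (value `e₁` on pairs one
below the other, `e₂` on pairs one to the left of the other) lies in the Kontsevich space
`K_m(|T|)`, the closure in `(S^{m-1})^{C(n,2)}` of the set of direction-vector data of genuine
configurations in `ℝ^m`. -/
theorem xT_mem_kontsevich_space (hm : 2 ≤ m) (t : PT) :
    xT hm t ∈ closure (Set.range (dirMap t)) := by
  classical
  set eseq : ℕ → ℝ := fun n => ((n:ℝ) + 2)⁻¹ with heseq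
  have hpos : ∀ n, 0 < eseq n := fun n => by simp only [heseq]; positivity
  have hlt1 : ∀ n, eseq n < 1 := fun n => by
    have h : (1:ℝ) < (n:ℝ) + 2 := by
      have := Nat.cast_nonneg (α := ℝ) n; linarith
    simp only [heseq]
    exact inv_lt_one_of_one_lt₀ h
  have h0 : Tendsto eseq atTop (𝓝 0) := by
    rw [heseq]
    exact tendsto_inv_atTop_zero.comp
      (tendsto_atTop_add_const_right _ 2 tendsto_natCast_atTop_atTop)
  have hinj : ∀ n, Function.Injective (ptCfg hm t (eseq n)) :=
    fun n => ptCfg_inj hm t (hpos n) (hlt1 n)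
  apply mem_closure_of_tendsto
    (f := fun n => dirMap t ⟨ptCfg hm t (eseq n), hinj n⟩) (b := atTop)
  · rw [tendsto_pi_nhds]
    rintro ⟨⟨v, w⟩, hvw⟩
    rw [tendsto_subtype_rng]
    simp only [dirMap]
    have hab : v.1.pos ≠ w.1.pos :=
      fun hp => hvw (Subtype.ext (pos_inj _ _ hp))
    rcases list_tri v.1.pos w.1.pos with hc | ⟨y, b', hb⟩ | ⟨x, a', ha⟩
      | ⟨p, x, y, a', b', hxy, ha, hb⟩
    · exact absurd hc hab
    · -- v below w : limit e₁
      have hBel : Below v w := ⟨⟨y :: b', hb.symm⟩, by rw [hb]; exact ne_append_cons _ _ _⟩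
      have hxT : xT hm t ⟨(v, w), hvw⟩ = e₁ m hm := by
        simp only [xT]; rw [if_pos hBel]
      rw [hxT]
      have hW0 : Tendsto (fun n => Ws (eseq n) (y :: b')) atTop (𝓝 0) := by
        have hcont := ((continuous_Ws (y :: b')).tendsto 0).comp h0
        simpa [Ws_zero_cons, Function.comp_def] using hcont
      have hH0 : Tendsto (fun n => Hs (eseq n) (y :: b')) atTop (𝓝 0) := by
        have hcont := ((continuous_Hs (y :: b')).tendsto 0).comp h0
        simpa [Hs_zero, Function.comp_def] using hcont
      have hg : Tendsto (fun n => (1 - Ws (eseq n) (y :: b')) • (e₁ m hm).1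
          + Hs (eseq n) (y :: b') • (e₂ m hm).1) atTop (𝓝 ((e₁ m hm).1)) := by
        have hlim := (((tendsto_const_nhds (x := (1:ℝ))).sub hW0).smul_const ((e₁ m hm).1)).add
          (hH0.smul_const ((e₂ m hm).1))
        simpa using hlim
      have hfg : ∀ n, ptCfg hm t (eseq n) w - ptCfg hm t (eseq n) v
          = Ws (eseq n) v.1.pos • ((1 - Ws (eseq n) (y :: b')) • (e₁ m hm).1
            + Hs (eseq n) (y :: b') • (e₂ m hm).1) := by
        intro n
        rw [diff_eq, hb, Ws_append, Hs_append]; module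
      have hmain := tendsto_normalize (fun n => Ws_pos (hpos n) v.1.pos)
        hfg (E1_ne hm) hg
      simpa [normE1 hm] using hmain
    · -- w below v : limit -e₁
      have hBel : Below w v := ⟨⟨x :: a', ha.symm⟩, by rw [ha]; exact ne_append_cons _ _ _⟩
      have hnB : ¬ Below v w := by
        intro hB
        have hle := hB.1.length_le
        have hlen := congrArg List.length ha
        simp at hlen
        omega
      have hxT : xT hm t ⟨(v, w), hvw⟩ = sphNeg m (e₁ m hm) := by
        simp only [xT]; rw [if_neg hnB, if_pos hBel]
      rw [hxT]
      have hW0 : Tendsto (fun n => Ws (eseq n) (x :: a')) atTop (𝓝 0) := by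
        have hcont := ((continuous_Ws (x :: a')).tendsto 0).comp h0
        simpa [Ws_zero_cons, Function.comp_def] using hcont
      have hH0 : Tendsto (fun n => Hs (eseq n) (x :: a')) atTop (𝓝 0) := by
        have hcont := ((continuous_Hs (x :: a')).tendsto 0).comp h0
        simpa [Hs_zero, Function.comp_def] using hcont
      have hg : Tendsto (fun n => (Ws (eseq n) (x :: a') - 1) • (e₁ m hm).1
          + (-(Hs (eseq n) (x :: a'))) • (e₂ m hm).1) atTop (𝓝 (-(e₁ m hm).1)) := by
        have hlim := ((hW0.sub (tendsto_const_nhds (x := (1:ℝ)))).smul_const ((e₁ m hm).1)).add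
          ((hH0.neg).smul_const ((e₂ m hm).1))
        simpa using hlim
      have hfg : ∀ n, ptCfg hm t (eseq n) w - ptCfg hm t (eseq n) v
          = Ws (eseq n) w.1.pos • ((Ws (eseq n) (x :: a') - 1) • (e₁ m hm).1
            + (-(Hs (eseq n) (x :: a'))) • (e₂ m hm).1) := by
        intro n
        rw [diff_eq, ha, Ws_append, Hs_append]; module
      have hmain := tendsto_normalize (fun n => Ws_pos (hpos n) w.1.pos)
        hfg (neg_ne_zero.2 (E1_ne hm)) hg
      simpa [sphNeg, normE1 hm] using hmain
    · -- diverging case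
      have hnB1 : ¬ Below v w := by
        intro hB
        have hp := hB.1
        rw [ha, hb] at hp
        exact not_prefix_div hxy p a' b' hp
      have hnB2 : ¬ Below w v := by
        intro hB
        have hp := hB.1
        rw [ha, hb] at hp
        exact not_prefix_div (Ne.symm hxy) p b' a' hp
      -- common limit data
      have hWa' := ((continuous_Ws a').tendsto 0).comp h0
      have hWb' := ((continuous_Ws b').tendsto 0).comp h0
      have hHa' := ((continuous_Hs a').tendsto 0).comp h0
      have hHb' := ((continuous_Hs b').tendsto 0).comp h0
      have c1 : Tendsto (fun n => eseq n *
          (dd x * Ws (eseq n) a' - dd y * Ws (eseq n) b')) atTop (𝓝 0) := by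
        have hlim := h0.mul ((hWa'.const_mul (dd x)).sub (hWb'.const_mul (dd y)))
        simpa using hlim
      have c2 : Tendsto (fun n => (cc y - cc x) + eseq n *
          (dd y * Hs (eseq n) b' - dd x * Hs (eseq n) a')) atTop (𝓝 (cc y - cc x)) := by
        have hlim := (tendsto_const_nhds (x := cc y - cc x)).add
          (h0.mul ((hHb'.const_mul (dd y)).sub (hHa'.const_mul (dd x))))
        simpa using hlim
      have hg : Tendsto (fun n =>
          (eseq n * (dd x * Ws (eseq n) a' - dd y * Ws (eseq n) b')) • (e₁ m hm).1
          + ((cc y - cc x) + eseq n *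
              (dd y * Hs (eseq n) b' - dd x * Hs (eseq n) a')) • (e₂ m hm).1)
          atTop (𝓝 ((cc y - cc x) • (e₂ m hm).1)) := by
        have hlim := (c1.smul_const ((e₁ m hm).1)).add (c2.smul_const ((e₂ m hm).1))
        simpa using hlim
      have hfg : ∀ n, ptCfg hm t (eseq n) w - ptCfg hm t (eseq n) v
          = (Ws (eseq n) p * eseq n) •
            ((eseq n * (dd x * Ws (eseq n) a' - dd y * Ws (eseq n) b')) • (e₁ m hm).1
            + ((cc y - cc x) + eseq n *
                (dd y * Hs (eseq n) b' - dd x * Hs (eseq n) a')) • (e₂ m hm).1) := by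
        intro n
        rw [diff_eq, ha, hb, Ws_append, Ws_append, Hs_append, Hs_append]
        simp only [Ws, Hs]
        module
      have hrpos : ∀ n, 0 < Ws (eseq n) p * eseq n :=
        fun n => mul_pos (Ws_pos (hpos n) p) (hpos n)
      rcases hxy.lt_or_gt with hlt | hlt
      · -- x < y : v left of w, limit e₂
        have hδ : 0 < cc y - cc x := cc_gap_pos hlt
        have hL : LeftOfV v w := by
          refine ⟨?_, ?_, ?_⟩
          · rw [ha, hb]; exact not_prefix_div hxy p a' b'
          · rw [ha, hb]; exact not_prefix_div (Ne.symm hxy) p b' a'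
          · rw [ha, hb]; exact lex_div hlt p a' b'
        have hxT : xT hm t ⟨(v, w), hvw⟩ = e₂ m hm := by
          simp only [xT]; rw [if_neg hnB1, if_neg hnB2, if_pos hL]
        rw [hxT]
        have hu : (cc y - cc x) • (e₂ m hm).1 ≠ 0 :=
          smul_ne_zero hδ.ne' (E2_ne hm)
        have hmain := tendsto_normalize hrpos hfg hu hg
        have hnorm : ‖(cc y - cc x) • (e₂ m hm).1‖⁻¹ • ((cc y - cc x) • (e₂ m hm).1)
            = (e₂ m hm).1 := by
          rw [norm_smul, Real.norm_eq_abs, abs_of_pos hδ, normE2 hm, mul_one,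
            smul_smul, inv_mul_cancel₀ hδ.ne', one_smul]
        rw [hnorm] at hmain
        exact hmain
      · -- y < x : w left of v, limit -e₂
        have hδ : cc y - cc x < 0 := by
          have := cc_gap_pos hlt; linarith
        have hnL : ¬ LeftOfV v w := by
          intro hL
          have hlex := hL.2.2
          rw [ha, hb] at hlex
          exact not_lex_div hlt p b' a' hlex
        have hxT : xT hm t ⟨(v, w), hvw⟩ = sphNeg m (e₂ m hm) := by
          simp only [xT]; rw [if_neg hnB1, if_neg hnB2, if_neg hnL]
        rw [hxT]
        have hu : (cc y - cc x) • (e₂ m hm).1 ≠ 0 :=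
          smul_ne_zero hδ.ne (E2_ne hm)
        have hmain := tendsto_normalize hrpos hfg hu hg
        have hnorm : ‖(cc y - cc x) • (e₂ m hm).1‖⁻¹ • ((cc y - cc x) • (e₂ m hm).1)
            = -((e₂ m hm).1) := by
          rw [norm_smul, Real.norm_eq_abs, abs_of_neg hδ, normE2 hm, mul_one,
            smul_smul, inv_neg, neg_mul, inv_mul_cancel₀ hδ.ne, neg_smul, one_smul]
        rw [hnorm] at hmain
        have hcoe : ((sphNeg m (e₂ m hm) : Metric.sphere (0 : EuclideanSpace ℝ (Fin m)) 1) :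
            EuclideanSpace ℝ (Fin m)) = -((e₂ m hm).1) := rfl
        rw [hcoe]
        exact hmain
  · exact Filter.Eventually.of_forall fun n => Set.mem_range_self _

end
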